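/- Let C be a closed convex subset of a real Hilbert space H, {xₙ} a sequence in H, u ∈ H, and q the metric projection of u onto C. If every weak subsequential limit of {xₙ} lies in C and ‖xₙ − u‖ ≤ ‖u − q‖ for all n, then xₙ converges strongly to q. -/

import Mathlib

open Filter Topology TopologicalSpace RealInnerProductSpace

/-- Weak sequential compactness of bounded sequences in a real Hilbert space. -/
lemma weak_subseq_of_bounded {H : Type*} [NormedAddCommGroup H] [InnerProductSpace ℝ H]
    [CompleteSpace H] (x : ℕ → H) (R : ℝ) (hR : ∀ n, ‖x n‖ ≤ R) :
    ∃ z : H, ∃ φ : ℕ → ℕ, StrictMono φ ∧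
      ∀ y : H, Tendsto (fun n => ⟪x (φ n), y⟫) atTop (𝓝 ⟪z, y⟫) := by
  have hR0 : (0 : ℝ) ≤ R := le_trans (norm_nonneg _) (hR 0)
  set K : Submodule ℝ H := (Submodule.span ℝ (Set.range x)).topologicalClosure with hK
  have hxK : ∀ n, x n ∈ K :=
    fun n => Submodule.le_topologicalClosure _ (Submodule.subset_span ⟨n, rfl⟩)
  haveI : CompleteSpace K :=
    (Submodule.isClosed_topologicalClosure _).completeSpace_coe
  -- separability of K
  have hsep : IsSeparable (K : Set H) := by
    have h1 : IsSeparable (Submodule.span ℝ (Set.range x) : Set H) :=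
      (Set.countable_range x).isSeparable.span
    simpa [hK, Submodule.topologicalClosure_coe] using h1.closure
  obtain ⟨c, hc_count, hc_sub⟩ := hsep
  have hc'_count : (insert (0 : H) c).Countable := hc_count.insert 0
  obtain ⟨d, hd⟩ := hc'_count.exists_eq_range ⟨0, Set.mem_insert 0 c⟩
  have hKdense : (K : Set H) ⊆ closure (Set.range d) := by
    rw [← hd]
    exact hc_sub.trans (closure_mono (Set.subset_insert _ _))
  -- diagonal extraction via compactness of a product of intervals
  set S : Set (ℕ → ℝ) := Set.univ.pi fun k => Metric.closedBall 0 (R * ‖d k‖) with hS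
  have hScomp : IsCompact S := isCompact_univ_pi fun k => isCompact_closedBall 0 _
  have hFS : ∀ n, (fun k => ⟪x n, d k⟫) ∈ S := by
    intro n
    intro k _
    simp only [Metric.mem_closedBall, Real.dist_eq, sub_zero]
    calc |⟪x n, d k⟫| ≤ ‖x n‖ * ‖d k‖ := abs_real_inner_le_norm _ _
      _ ≤ R * ‖d k‖ := mul_le_mul_of_nonneg_right (hR n) (norm_nonneg _)
  obtain ⟨g, -, φ, hφ, hconv⟩ := hScomp.tendsto_subseq hFS
  have hconvk : ∀ k, Tendsto (fun n => ⟪x (φ n), d k⟫) atTop (𝓝 (g k)) := by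
    intro k
    exact (tendsto_pi_nhds.mp hconv k)
  -- convergence of ⟪x (φ n), y⟫ for every y
  have hcauchy : ∀ y : H, CauchySeq (fun n => ⟪x (φ n), y⟫) := by
    intro y
    set Py : H := (K.orthogonalProjectionOnto y : H) with hPy
    have hinner : ∀ n, ⟪x (φ n), y⟫ = ⟪x (φ n), Py⟫ := by
      intro n
      have h0 : ⟪x (φ n), y - Py⟫ = 0 :=
        (Submodule.mem_orthogonal K _).1 (K.sub_starProjection_mem_orthogonal y)
          _ (hxK (φ n))
      have := inner_sub_right (𝕜 := ℝ) (x (φ n)) y Py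
      rw [h0] at this
      linarith [this]
    rw [Metric.cauchySeq_iff]
    intro ε hε
    have hε' : 0 < ε / (4 * (R + 1)) := by positivity
    obtain ⟨w, ⟨k, rfl⟩, hwk⟩ := Metric.mem_closure_iff.1 (hKdense (K.orthogonalProjectionOnto y).2)
      _ hε'
    have hck : CauchySeq (fun n => ⟪x (φ n), d k⟫) := (hconvk k).cauchySeq
    obtain ⟨N, hN⟩ := Metric.cauchySeq_iff.1 hck (ε / 2) (by linarith)
    refine ⟨N, fun m hm n hn => ?_⟩
    have key : ∀ j, |⟪x (φ j), Py - d k⟫| ≤ R * ‖Py - d k‖ := by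
      intro j
      calc |⟪x (φ j), Py - d k⟫| ≤ ‖x (φ j)‖ * ‖Py - d k‖ := abs_real_inner_le_norm _ _
        _ ≤ R * ‖Py - d k‖ := mul_le_mul_of_nonneg_right (hR _) (norm_nonneg _)
    have hdist : ‖Py - d k‖ < ε / (4 * (R + 1)) := by
      rw [← dist_eq_norm]; exact hwk
    have hRb : R * ‖Py - d k‖ < ε / 4 := by
      have h1 : R * ‖Py - d k‖ ≤ R * (ε / (4 * (R + 1))) :=
        mul_le_mul_of_nonneg_left hdist.le hR0
      have h2 : R * (ε / (4 * (R + 1))) < ε / 4 := by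
        have hR1 : (0:ℝ) < R + 1 := by linarith
        have hfrac : R / (R + 1) < 1 := (div_lt_one hR1).2 (by linarith)
        calc R * (ε / (4 * (R + 1))) = (R / (R + 1)) * (ε / 4) := by
              field_simp
              try ring
              try exact Or.inl trivial
          _ < 1 * (ε / 4) := by
              exact mul_lt_mul_of_pos_right hfrac (by positivity)
          _ = ε / 4 := one_mul _
      linarith
    have hmn := hN m hm n hn
    rw [Real.dist_eq] at hmn ⊢
    rw [hinner m, hinner n]
    have expand : ⟪x (φ m), Py⟫ - ⟪x (φ n), Py⟫ =
        (⟪x (φ m), Py - d k⟫ - ⟪x (φ n), Py - d k⟫) +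
          (⟪x (φ m), d k⟫ - ⟪x (φ n), d k⟫) := by
      simp only [inner_sub_right]; ring
    rw [expand]
    calc |(⟪x (φ m), Py - d k⟫ - ⟪x (φ n), Py - d k⟫) +
          (⟪x (φ m), d k⟫ - ⟪x (φ n), d k⟫)|
        ≤ |⟪x (φ m), Py - d k⟫| + |⟪x (φ n), Py - d k⟫| +
            |⟪x (φ m), d k⟫ - ⟪x (φ n), d k⟫| := by
          have := abs_add_le (⟪x (φ m), Py - d k⟫ - ⟪x (φ n), Py - d k⟫)
            (⟪x (φ m), d k⟫ - ⟪x (φ n), d k⟫)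
          have := abs_sub (⟪x (φ m), Py - d k⟫) (⟪x (φ n), Py - d k⟫)
          linarith [abs_sub_abs_le_abs_sub (⟪x (φ m), Py - d k⟫) (⟪x (φ n), Py - d k⟫),
            abs_sub (⟪x (φ m), Py - d k⟫) (⟪x (φ n), Py - d k⟫)]
      _ < ε / 4 + ε / 4 + ε / 2 := by
          have := key m; have := key n
          linarith [hmn]
      _ = ε := by ring
  have hlim : ∀ y : H, ∃ l : ℝ, Tendsto (fun n => ⟪x (φ n), y⟫) atTop (𝓝 l) :=
    fun y => cauchySeq_tendsto_of_complete (hcauchy y)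
  choose L hL using hlim
  -- L is a bounded linear functional
  have hLadd : ∀ a b : H, L (a + b) = L a + L b := by
    intro a b
    refine tendsto_nhds_unique (hL (a + b)) ?_
    have := (hL a).add (hL b)
    simpa [inner_add_right] using this
  have hLsmul : ∀ (r : ℝ) (a : H), L (r • a) = r * L a := by
    intro r a
    refine tendsto_nhds_unique (hL (r • a)) ?_
    have := (hL a).const_mul r
    simpa [inner_smul_right] using this
  have hLbound : ∀ y : H, ‖L y‖ ≤ R * ‖y‖ := by
    intro y
    rw [Real.norm_eq_abs]
    refine le_of_tendsto (hL y).abs (Eventually.of_forall fun n => ?_)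
    calc |⟪x (φ n), y⟫| ≤ ‖x (φ n)‖ * ‖y‖ := abs_real_inner_le_norm _ _
      _ ≤ R * ‖y‖ := mul_le_mul_of_nonneg_right (hR _) (norm_nonneg _)
  set L' : H →ₗ[ℝ] ℝ :=
    { toFun := L, map_add' := hLadd, map_smul' := hLsmul } with hL'
  set Lc : H →L[ℝ] ℝ := LinearMap.mkContinuous L' R hLbound with hLc
  refine ⟨(InnerProductSpace.toDual ℝ H).symm Lc, φ, hφ, fun y => ?_⟩
  have : ⟪(InnerProductSpace.toDual ℝ H).symm Lc, y⟫ = Lc y :=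
    InnerProductSpace.toDual_symm_apply
  rw [this]
  exact hL y

theorem strong_convergence_to_projection
    {H : Type*} [NormedAddCommGroup H] [InnerProductSpace ℝ H] [CompleteSpace H]
    (C : Set H) (hC : IsClosed C) (hCconv : Convex ℝ C) (hCne : C.Nonempty)
    (x : ℕ → H) (u q : H) (hqC : q ∈ C)
    (hq : ∀ y ∈ C, ‖u - q‖ ≤ ‖u - y‖)
    (hweak : ∀ z : H, ∀ φ : ℕ → ℕ, StrictMono φ →
      (∀ f : H →L[ℝ] ℝ,
        Filter.Tendsto (fun n => f (x (φ n))) Filter.atTop (nhds (f z))) →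
      z ∈ C)
    (hbound : ∀ n, ‖x n - u‖ ≤ ‖u - q‖) :
    Filter.Tendsto x Filter.atTop (nhds q) := by
  -- variational characterization of the projection
  have hinf : ‖u - q‖ = ⨅ w : C, ‖u - w‖ := by
    haveI : Nonempty C := ⟨⟨q, hqC⟩⟩
    refine le_antisymm (le_ciInf fun w => hq w w.2) ?_
    exact ciInf_le ⟨0, fun r ⟨w, hw⟩ => hw ▸ norm_nonneg _⟩ (⟨q, hqC⟩ : C)
  have hproj : ∀ w ∈ C, ⟪u - q, w - q⟫ ≤ 0 :=
    (norm_eq_iInf_iff_real_inner_le_zero hCconv hqC).1 hinf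
  -- key quadratic estimate
  have hkey : ∀ n, ‖x n - q‖ ^ 2 ≤ 2 * ⟪x n - q, u - q⟫ := by
    intro n
    have e1 : ‖x n - q‖ ^ 2 = ‖(x n - u) + (u - q)‖ ^ 2 := by rw [sub_add_sub_cancel]
    have e2 : ‖(x n - u) + (u - q)‖ ^ 2 =
        ‖x n - u‖ ^ 2 + 2 * ⟪x n - u, u - q⟫ + ‖u - q‖ ^ 2 := by
      rw [← norm_add_sq_real]
    have e3 : ⟪x n - u, u - q⟫ = ⟪x n - q, u - q⟫ - ‖u - q‖ ^ 2 := by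
      have : x n - u = (x n - q) - (u - q) := by abel
      rw [this, inner_sub_left, real_inner_self_eq_norm_sq]
    have e4 : ‖x n - u‖ ^ 2 ≤ ‖u - q‖ ^ 2 :=
      pow_le_pow_left₀ (norm_nonneg _) (hbound n) 2
    nlinarith [e1, e2, e3, e4]
  -- the inner products go below any positive ε eventually
  have hsmall : ∀ ε > (0:ℝ), ∀ᶠ n in atTop, ⟪x n - q, u - q⟫ < ε := by
    intro ε hε
    by_contra hcon
    rw [Filter.not_eventually] at hcon
    have hcon' : ∃ᶠ n in atTop, ε ≤ ⟪x n - q, u - q⟫ := by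
      refine hcon.mono fun n hn => ?_
      push_neg at hn; exact hn
    obtain ⟨ψ, hψ, hψε⟩ := Filter.extraction_of_frequently_atTop hcon'
    have hBd : ∀ n, ‖(x ∘ ψ) n‖ ≤ ‖u‖ + ‖u - q‖ := by
      intro n
      calc ‖x (ψ n)‖ = ‖(x (ψ n) - u) + u‖ := by rw [sub_add_cancel]
        _ ≤ ‖x (ψ n) - u‖ + ‖u‖ := norm_add_le _ _
        _ ≤ ‖u - q‖ + ‖u‖ := by linarith [hbound (ψ n)]
        _ = ‖u‖ + ‖u - q‖ := by ring
    obtain ⟨z, φ, hφ, hzconv⟩ := weak_subseq_of_bounded (x ∘ ψ) (‖u‖ + ‖u - q‖) hBd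
    have hzC : z ∈ C := by
      refine hweak z (ψ ∘ φ) (hψ.comp hφ) fun f => ?_
      set w : H := (InnerProductSpace.toDual ℝ H).symm f with hw
      have hfw : ∀ v : H, ⟪w, v⟫ = f v := fun v => InnerProductSpace.toDual_symm_apply
      have := hzconv w
      have heq : (fun n => ⟪(x ∘ ψ) (φ n), w⟫) = fun n => f (x ((ψ ∘ φ) n)) := by
        funext n
        rw [real_inner_comm, hfw]
        rfl
      rw [heq] at this
      rwa [real_inner_comm, hfw] at this
    have hlim : Filter.Tendsto (fun n => ⟪x ((ψ ∘ φ) n) - q, u - q⟫) atTop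
        (𝓝 ⟪z - q, u - q⟫) := by
      have h1 := hzconv (u - q)
      have h2 : (fun n => ⟪x ((ψ ∘ φ) n) - q, u - q⟫) =
          fun n => ⟪(x ∘ ψ) (φ n), u - q⟫ - ⟪q, u - q⟫ := by
        funext n; rw [inner_sub_left]; rfl
      rw [h2, show (⟪z - q, u - q⟫ : ℝ) = ⟪z, u - q⟫ - ⟪q, u - q⟫ by rw [inner_sub_left]]
      exact h1.sub_const _
    have hle : ε ≤ ⟪z - q, u - q⟫ :=
      le_of_tendsto_of_tendsto' tendsto_const_nhds hlim fun n => hψε (φ n)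
    have : ⟪z - q, u - q⟫ ≤ 0 := by
      rw [real_inner_comm]; exact hproj z hzC
    linarith
  -- conclude strong convergence
  rw [Metric.tendsto_atTop]
  intro ε hε
  have h2 : (0:ℝ) < ε ^ 2 / 2 := by positivity
  obtain ⟨N, hN⟩ := Filter.eventually_atTop.1 (hsmall (ε ^ 2 / 2) h2)
  refine ⟨N, fun n hn => ?_⟩
  rw [dist_eq_norm]
  have := hkey n
  have := hN n hn
  nlinarith [norm_nonneg (x n - q)]
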